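/- Let T be a torus with character lattice M, let N be a finite multiset of weights in M closed under negation (a symmetric representation), and let λ, μ be cocharacters. In the fraction field of the group algebra ℚ(q^M), the identity ∏_{β ∈ A_μ}(1−q^{−β}) / ∏_{β ∈ A_λ}(1−q^{−β}) = (−1)^{c} · q^{𝒩} holds, where A_λ = {β ∈ N : λ(β) > 0}, A_μ = {β ∈ N : μ(β) > 0}, provided λ and μ have the same zero set on N; here c = |{β ∈ A_λ : μ(β) < 0}| and 𝒩 = ∑_{β ∈ A_λ, μ(β)<0} β. -/

import Mathlib

instance (priority := low) {M : Type} [AddCommGroup M] [LinearOrder M] [IsOrderedAddMonoid M] :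
    IsDomain (AddMonoidAlgebra ℚ M) :=
  NoZeroDivisors.to_isDomain _

section Aux
variable {M : Type} [AddCommGroup M] [LinearOrder M] [IsOrderedAddMonoid M]

local notation "FF" => FractionRing (AddMonoidAlgebra ℚ M)

noncomputable def qq (β : M) : FractionRing (AddMonoidAlgebra ℚ M) :=
  algebraMap (AddMonoidAlgebra ℚ M) (FractionRing (AddMonoidAlgebra ℚ M))
    (AddMonoidAlgebra.single β 1)

lemma qq_zero : qq (0 : M) = 1 := by
  rw [qq, ← AddMonoidAlgebra.one_def, map_one]

lemma qq_mul (a b : M) : qq a * qq b = qq (a + b) := by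
  rw [qq, qq, qq, ← map_mul, AddMonoidAlgebra.single_mul_single, one_mul]

lemma qq_sum (S : Multiset M) : (S.map qq).prod = qq S.sum := by
  induction S using Multiset.induction with
  | empty => simp [qq_zero]
  | cons a s ih => simp [ih, qq_mul]

lemma one_sub_qq_ne_zero {β : M} (hβ : β ≠ 0) : (1 : FF) - qq β ≠ 0 := by
  intro h
  have h1 : (1 : FF) = qq β := by rw [sub_eq_zero] at h; exact h
  have h2 : (1 : AddMonoidAlgebra ℚ M) = AddMonoidAlgebra.single β 1 :=
    IsFractionRing.injective (AddMonoidAlgebra ℚ M) FF (by simpa [qq] using h1)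
  rw [AddMonoidAlgebra.one_def] at h2
  rcases AddMonoidAlgebra.single_inj.mp h2 with ⟨h3, -⟩ | ⟨h3, -⟩
  · exact hβ h3.symm
  · exact one_ne_zero h3

lemma one_sub_qq_neg (β : M) :
    (1 : FF) - qq β = (-qq β) * (1 - qq (-β)) := by
  rw [mul_sub, mul_one, neg_mul, qq_mul, add_neg_cancel, qq_zero]
  ring
end Aux

/-- Let `T` be a torus with character lattice `M`, `N` a finite multiset
of weights closed under negation, and `l, μ` cocharacters with the same zero set on `N`.
In the fraction field of the group algebra `ℚ[M]`, with `q^β` the class of `β`,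
`∏_{β ∈ A_μ}(1−q^{−β}) / ∏_{β ∈ A_λ}(1−q^{−β}) = (−1)^c · q^{𝒩}`, where
`A_λ = {β ∈ N : l β > 0}`, `A_μ = {β ∈ N : μ β > 0}`, `c = #{β ∈ A_λ : μ β < 0}` and
`𝒩 = ∑_{β ∈ A_λ, μ β < 0} β`. -/
theorem symmetric_weights_product_ratio {M : Type} [AddCommGroup M] [LinearOrder M] [IsOrderedAddMonoid M]
    (N : Multiset M) (hsym : N.map (fun β => -β) = N)
    (l μ : M →+ ℤ)
    (hzero : N.filter (fun β => l β = 0) = N.filter (fun β => μ β = 0)) :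
    letI F := FractionRing (AddMonoidAlgebra ℚ M)
    letI q : M → F := fun β => algebraMap (AddMonoidAlgebra ℚ M) F (AddMonoidAlgebra.single β 1)
    (((N.filter fun β => 0 < μ β).map (fun β => 1 - q (-β))).prod) /
        (((N.filter fun β => 0 < l β).map (fun β => 1 - q (-β))).prod) =
      (-1 : F) ^ (((N.filter fun β => 0 < l β).filter fun β => μ β < 0).card) *
        q (((N.filter fun β => 0 < l β).filter fun β => μ β < 0).sum) := by
  show (((N.filter fun β => 0 < μ β).map (fun β => 1 - qq (-β))).prod) /
        (((N.filter fun β => 0 < l β).map (fun β => 1 - qq (-β))).prod) =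
      (-1) ^ (((N.filter fun β => 0 < l β).filter fun β => μ β < 0).card) *
        qq (((N.filter fun β => 0 < l β).filter fun β => μ β < 0).sum)
  classical
  have hz : ∀ β ∈ N, (l β = 0 ↔ μ β = 0) := by
    intro β hβ
    have hc := congrArg (Multiset.count β) hzero
    rw [Multiset.count_filter, Multiset.count_filter] at hc
    have hpos : 0 < Multiset.count β N := Multiset.count_pos.mpr hβ
    constructor <;> intro h <;> by_contra h'
    · rw [if_pos h, if_neg h'] at hc; omega
    · rw [if_neg h', if_pos h] at hc; omega
  set AL := N.filter (fun β => 0 < l β) with hAL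
  set S := AL.filter (fun β => μ β < 0) with hS
  set P := AL.filter (fun β => 0 < μ β) with hP
  have hmune : ∀ β ∈ AL, μ β ≠ 0 := by
    intro β hβ
    have hβN : β ∈ N := Multiset.mem_of_mem_filter hβ
    have hl : 0 < l β := (Multiset.mem_filter.mp hβ).2
    have := hz β hβN
    omega
  have hALsplit : AL = P + S := by
    rw [hP, hS]
    conv_lhs => rw [← Multiset.filter_add_not (fun β => 0 < μ β) AL]
    congr 1
    apply Multiset.filter_congr
    intro β hβ
    have := hmune β hβ
    constructor <;> intro <;> omega
  have hAμsplit : N.filter (fun β => 0 < μ β) = P + S.map (fun β => -β) := by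
    conv_lhs => rw [← Multiset.filter_add_not (fun β => 0 < l β) (N.filter (fun β => 0 < μ β))]
    congr 1
    · rw [hP, hAL, Multiset.filter_filter, Multiset.filter_filter]
      apply Multiset.filter_congr
      intro β hβ; constructor <;> intro h <;> exact ⟨h.2, h.1⟩
    · rw [Multiset.filter_filter, hS, hAL, Multiset.filter_filter]
      conv_lhs => rw [← hsym]
      rw [Multiset.filter_map]
      congr 1
      apply Multiset.filter_congr
      intro β hβ
      have hzβ := hz β hβ
      simp only [Function.comp, map_neg]
      constructor <;> intro h <;> constructor <;> omega
  -- nonzero facts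
  have hne : ∀ T : Multiset M, (∀ β ∈ T, β ≠ (0:M)) →
      (T.map (fun β => 1 - qq (-β))).prod ≠ 0 := by
    intro T hT
    apply Multiset.prod_ne_zero
    intro h0
    obtain ⟨β, hβ, hβ0⟩ := Multiset.mem_map.mp h0
    exact one_sub_qq_ne_zero (neg_ne_zero.mpr (hT β hβ)) hβ0
  have hALne : ∀ β ∈ AL, β ≠ (0:M) := by
    intro β hβ h0
    have hl : 0 < l β := (Multiset.mem_filter.mp hβ).2
    rw [h0] at hl; simp at hl
  have hDen : (AL.map (fun β => 1 - qq (-β))).prod ≠ 0 := hne AL hALne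
  rw [div_eq_iff hDen]
  rw [hAμsplit]
  conv_rhs => rw [hALsplit]
  rw [Multiset.map_add, Multiset.map_add, Multiset.prod_add, Multiset.prod_add]
  rw [Multiset.map_map]
  have hSmap : (S.map ((fun β => 1 - qq (-β)) ∘ fun β => -β)).prod
      = (-1) ^ S.card * qq S.sum * (S.map (fun β => 1 - qq (-β))).prod := by
    have : ((fun β => 1 - qq (-β)) ∘ fun β => -β) = fun β : M => (1 : FractionRing (AddMonoidAlgebra ℚ M)) - qq β := by
      funext β; simp
    rw [this]
    have h2 : (fun β : M => (1 : FractionRing (AddMonoidAlgebra ℚ M)) - qq β)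
        = fun β : M => (-qq β) * (1 - qq (-β)) := by
      funext β; exact one_sub_qq_neg β
    rw [h2, Multiset.prod_map_mul]
    congr 1
    have : (S.map fun β : M => -qq β) = (S.map qq).map Neg.neg := by
      rw [Multiset.map_map]; rfl
    rw [this, Multiset.prod_map_neg, Multiset.card_map, qq_sum]
  rw [hSmap]
  ring
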